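/- Let $b>0$, $\theta>0$, and $\bar{\mu}:(0,\infty)\to[0,\infty)$ be nonincreasing, right-continuous, finite. Set $f_\theta(x)=\int_x^\infty e^{-\frac{\theta}{b}s}\exp\left(\frac{1}{b}\int_s^1\bar{\mu}(u)du\right)ds$. Then for every $x>0$, $f_\theta$ is differentiable at $x$ with $f_\theta'(x)=-e^{-\frac{\theta}{b}x}\exp\left(\frac{1}{b}\int_x^1\bar{\mu}(u)du\right)$, and $f_\theta$ satisfies the integral equation $\int_x^\infty \bar{\mu}(v)f_\theta'(v)\,dv - b f_\theta'(x) = \theta f_\theta(x)$. -/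

import Mathlib

open MeasureTheory Set Filter Topology

/-- The function `f_θ` is differentiable on `(0,∞)` with explicit derivative, and
is `θ`-invariant for the generator: `∫_x^∞ μ̄ f_θ' - b f_θ'(x) = θ f_θ(x)`. -/
theorem esn_ftheta_invariant
    (b θ : ℝ) (hb : 0 < b) (hθ : 0 < θ)
    (μbar : ℝ → ℝ) (hmono : AntitoneOn μbar (Set.Ioi 0))
    (hrc : ∀ x, 0 < x → ContinuousWithinAt μbar (Set.Ici x) x)
    (hnonneg : ∀ x, 0 < x → 0 ≤ μbar x)
    (f g : ℝ → ℝ)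
    (hf : ∀ x, f x =
      ∫ s in Set.Ioi x, Real.exp (-(θ / b) * s) * Real.exp ((1 / b) * ∫ u in s..1, μbar u))
    (hg : ∀ x, g x =
      -(Real.exp (-(θ / b) * x) * Real.exp ((1 / b) * ∫ u in x..1, μbar u))) :
    ∀ x : ℝ, 0 < x →
      HasDerivAt f (g x) x ∧
      (∫ v in Set.Ioi x, μbar v * g v) - b * g x = θ * f x := by
  set M : ℝ → ℝ := fun s => ∫ u in s..1, μbar u with hM
  set h : ℝ → ℝ := fun s => Real.exp (-(θ / b) * s) * Real.exp ((1 / b) * M s) with hh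
  -- μbar is interval integrable on positive intervals
  have hμint : ∀ p q : ℝ, 0 < p → 0 < q → IntervalIntegrable μbar volume p q := by
    intro p q hp hq
    refine (hmono.mono ?_).intervalIntegrable
    intro u hu
    exact lt_of_lt_of_le (lt_min hp hq) hu.1
  -- μbar is a.e. strongly measurable on Ici a for a > 0
  have hμmeas : ∀ a : ℝ, 0 < a → AEStronglyMeasurable μbar (volume.restrict (Set.Ici a)) := by
    intro a ha
    have hN : Antitone (fun v => μbar (max v a)) := by
      intro v w hvw
      exact hmono (lt_of_lt_of_le ha (le_max_right v a))
        (lt_of_lt_of_le ha (le_max_right w a)) (max_le_max hvw le_rfl)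
    refine (hN.measurable.aestronglyMeasurable).congr ?_
    filter_upwards [ae_restrict_mem measurableSet_Ici] with v hv
    simp [max_eq_left (Set.mem_Ici.mp hv)]
  -- M is continuous at every positive point
  have hMeq : M = fun s => -∫ u in (1:ℝ)..s, μbar u := by
    funext s; simp [hM, intervalIntegral.integral_symm 1 s]
  have hMcont : ∀ x : ℝ, 0 < x → ContinuousAt M x := by
    intro x hx
    rw [hMeq]
    refine ContinuousAt.neg ?_
    have hIcc : Set.Icc (x/2) (x+1) ∈ nhds x :=
      Icc_mem_nhds (by linarith) (by linarith)
    refine ContinuousWithinAt.continuousAt ?_ hIcc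
    refine intervalIntegral.continuousWithinAt_primitive (measure_singleton x) ?_
    refine hμint _ _ ?_ ?_ <;> simp <;> positivity
  have hhcont : ∀ x : ℝ, 0 < x → ContinuousAt h x := by
    intro x hx
    exact ((Real.continuous_exp.continuousAt.comp
      ((continuous_const.mul continuous_id).continuousAt)).mul
      (Real.continuous_exp.continuousAt.comp ((hMcont x hx).const_mul _)))
  have hhpos : ∀ s : ℝ, 0 < h s := fun s => mul_pos (Real.exp_pos _) (Real.exp_pos _)
  -- bound on M
  have hMbd : ∀ a : ℝ, 0 < a → ∀ s : ℝ, a ≤ s → M s ≤ max (μbar (min a 1)) 0 := by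
    intro a ha s hs
    have hm0 : 0 < min a 1 := lt_min ha one_pos
    have hμm : 0 ≤ μbar (min a 1) := hnonneg _ hm0
    have hs0 : 0 < s := lt_of_lt_of_le ha hs
    rcases le_total s 1 with hs1 | hs1
    · have h1 : (∫ u in s..1, μbar u) ≤ ∫ u in (s:ℝ)..1, μbar (min a 1) := by
        refine intervalIntegral.integral_mono_on hs1 (hμint s 1 hs0 one_pos)
          intervalIntegrable_const (fun u hu => ?_)
        exact hmono hm0 (lt_of_lt_of_le hs0 hu.1)
          ((min_le_left a 1).trans (hs.trans hu.1))
      have h2 : (∫ u in (s:ℝ)..1, μbar (min a 1)) = (1 - s) * μbar (min a 1) := by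
        simp [smul_eq_mul]
      have h3 : (1 - s) * μbar (min a 1) ≤ max (μbar (min a 1)) 0 := by
        have := le_max_left (μbar (min a 1)) 0
        nlinarith
      calc M s ≤ (1 - s) * μbar (min a 1) := by rw [← h2]; exact h1
        _ ≤ _ := h3
    · have h1 : 0 ≤ ∫ u in (1:ℝ)..s, μbar u :=
        intervalIntegral.integral_nonneg hs1
          (fun u hu => hnonneg u (lt_of_lt_of_le one_pos hu.1))
      have h2 : M s ≤ 0 := by
        rw [hMeq]; simp only [neg_nonpos]; linarith
      exact h2.trans (le_max_right _ _)
  -- exponential domination of h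
  have hhbd : ∀ a : ℝ, 0 < a → ∃ C : ℝ, 0 < C ∧ ∀ s : ℝ, a ≤ s →
      h s ≤ C * Real.exp (-(θ/b) * s) := by
    intro a ha
    refine ⟨Real.exp ((1/b) * max (μbar (min a 1)) 0), Real.exp_pos _, fun s hs => ?_⟩
    calc h s = Real.exp ((1/b) * M s) * Real.exp (-(θ/b)*s) := by rw [hh]; ring
      _ ≤ _ := by
          refine mul_le_mul_of_nonneg_right ?_ (Real.exp_pos _).le
          refine Real.exp_le_exp.2 (mul_le_mul_of_nonneg_left (hMbd a ha s hs) ?_)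
          positivity
  -- integrability of h on Ioi a
  have hhdom : ∀ (C a : ℝ), IntegrableOn (fun s => C * Real.exp (-(θ/b)*s)) (Set.Ioi a) := by
    intro C a
    exact (exp_neg_integrableOn_Ioi a (div_pos hθ hb)).const_mul C
  have hhint : ∀ a : ℝ, 0 < a → IntegrableOn h (Set.Ioi a) := by
    intro a ha
    obtain ⟨C, hC, hCb⟩ := hhbd a ha
    refine Integrable.mono' (hhdom C a) ?_ ?_
    · exact ContinuousOn.aestronglyMeasurable
        (fun s hs => (hhcont s (ha.trans hs)).continuousWithinAt) measurableSet_Ioi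
    · filter_upwards [ae_restrict_mem measurableSet_Ioi] with s hs
      rw [Real.norm_of_nonneg (hhpos s).le]
      exact hCb s (le_of_lt hs)
  -- integrability of μbar * h on Ioi x
  have hμhint : ∀ x : ℝ, 0 < x → IntegrableOn (fun v => μbar v * h v) (Set.Ioi x) := by
    intro x hx
    obtain ⟨C, hC, hCb⟩ := hhbd x hx
    refine Integrable.mono' (hhdom (μbar x * C) x) ?_ ?_
    · exact ((hμmeas x hx).mono_set Ioi_subset_Ici_self).mul
        (ContinuousOn.aestronglyMeasurable
          (fun s hs => (hhcont s (hx.trans hs)).continuousWithinAt) measurableSet_Ioi)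
    · filter_upwards [ae_restrict_mem measurableSet_Ioi] with v hv
      have h1 : 0 ≤ μbar v := hnonneg v (hx.trans hv)
      have h2 : μbar v ≤ μbar x := hmono hx (hx.trans hv) (le_of_lt hv)
      rw [Real.norm_of_nonneg (mul_nonneg h1 (hhpos v).le), mul_assoc]
      exact mul_le_mul h2 (hCb v hv.le) (hhpos v).le (hnonneg x hx)
  -- right derivative of h
  have hhd : ∀ v : ℝ, 0 < v →
      HasDerivWithinAt h ((-(θ/b) + (1/b) * (-(μbar v))) * h v) (Set.Ioi v) v := by
    intro v hv
    have hsm : StronglyMeasurableAtFilter μbar (nhdsWithin v (Set.Ioi v)) volume :=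
      ⟨Set.Ici v, mem_of_superset self_mem_nhdsWithin Set.Ioi_subset_Ici_self, hμmeas v hv⟩
    have hP : HasDerivWithinAt (fun s => ∫ u in (1:ℝ)..s, μbar u) (μbar v) (Set.Ici v) v :=
      intervalIntegral.integral_hasDerivWithinAt_right (s := Set.Ici v) (t := Set.Ioi v)
        (hμint 1 v one_pos hv) hsm ((hrc v hv).mono Set.Ioi_subset_Ici_self)
    have hMd : HasDerivWithinAt M (-(μbar v)) (Set.Ioi v) v := by
      rw [hMeq]
      exact ((hP.mono Set.Ioi_subset_Ici_self).neg)
    have e1 : HasDerivAt (fun s : ℝ => Real.exp (-(θ/b) * s))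
        (Real.exp (-(θ/b) * v) * (-(θ/b))) v := by
      have : HasDerivAt (fun s : ℝ => -(θ/b) * s) (-(θ/b)) v := by
        simpa using (hasDerivAt_id v).const_mul (-(θ/b))
      exact this.exp
    have e2 : HasDerivWithinAt (fun s => Real.exp ((1/b) * M s))
        (Real.exp ((1/b) * M v) * ((1/b) * (-(μbar v)))) (Set.Ioi v) v :=
      (hMd.const_mul (1/b)).exp
    have := (e1.hasDerivWithinAt).mul e2
    convert this using 1
    · rfl
    · rfl
    · rfl
    simp only [hh]
    ring
  -- main FTC identity
  have hFTC : ∀ x T : ℝ, 0 < x → x ≤ T →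
      (∫ v in x..T, (θ * h v + μbar v * h v)) = b * h x - b * h T := by
    intro x T hx hxT
    have hGd : ∀ v ∈ Set.Ioo x T,
        HasDerivWithinAt (fun v => -b * h v) (θ * h v + μbar v * h v) (Set.Ioi v) v := by
      intro v hv
      have := (hhd v (hx.trans hv.1)).const_mul (-b)
      convert this using 1
      · rfl
      · rfl
      field_simp
      ring
    have hGc : ContinuousOn (fun v => -b * h v) (Set.Icc x T) := fun v hv =>
      (continuousAt_const.mul (hhcont v (lt_of_lt_of_le hx hv.1))).continuousWithinAt
    have hint : IntervalIntegrable (fun v => θ * h v + μbar v * h v) volume x T := by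
      rw [intervalIntegrable_iff_integrableOn_Ioc_of_le hxT]
      exact ((((hhint x hx).mono_set Set.Ioc_subset_Ioi_self).const_mul θ)).add
        ((hμhint x hx).mono_set Set.Ioc_subset_Ioi_self)
    have := intervalIntegral.integral_eq_sub_of_hasDeriv_right_of_le hxT hGc hGd hint
    rw [this]; ring
  intro x hx
  have hfx : f x = ∫ s in Set.Ioi x, h s := hf x
  have hgx : ∀ y, g y = -h y := fun y => hg y
  have hfe : ∀ y : ℝ, f y = ∫ s in Set.Ioi y, h s := by
    intro y; exact hf y
  constructor
  · -- differentiability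
    have ha : (0:ℝ) < x/2 := by linarith
    have hax : x/2 < x := by linarith
    have key : ∀ y : ℝ, x/2 < y →
        f y = (∫ s in Set.Ioi (x/2), h s) - ∫ s in (x/2)..y, h s := by
      intro y hay
      have hu : Set.Ioc (x/2) y ∪ Set.Ioi y = Set.Ioi (x/2) :=
        Set.Ioc_union_Ioi_eq_Ioi hay.le
      have hi1 : IntegrableOn h (Set.Ioc (x/2) y) :=
        (hhint _ ha).mono_set Set.Ioc_subset_Ioi_self
      have hi2 : IntegrableOn h (Set.Ioi y) := hhint y (ha.trans hay)
      have hsum := setIntegral_union (μ := volume) (f := h)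
        (Set.Ioc_disjoint_Ioi le_rfl) measurableSet_Ioi hi1 hi2
      rw [hu] at hsum
      rw [hfe y, intervalIntegral.integral_of_le hay.le]
      linarith
    have hd1 : HasDerivAt (fun y => ∫ s in (x/2)..y, h s) (h x) x := by
      refine intervalIntegral.integral_hasDerivAt_right ?_ ?_ (hhcont x hx)
      · rw [intervalIntegrable_iff_integrableOn_Ioc_of_le hax.le]
        exact (hhint _ ha).mono_set Set.Ioc_subset_Ioi_self
      · exact ⟨Set.Ioi 0, Ioi_mem_nhds hx, ContinuousOn.aestronglyMeasurable
          (fun s hs => (hhcont s hs).continuousWithinAt) measurableSet_Ioi⟩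
    have hF : HasDerivAt (fun y => (∫ s in Set.Ioi (x/2), h s) - ∫ s in (x/2)..y, h s)
        (-(h x)) x := hd1.const_sub _
    have hfd : HasDerivAt f (-(h x)) x := by
      refine hF.congr_of_eventuallyEq ?_
      filter_upwards [Ioi_mem_nhds hax] with y hy
      exact key y hy
    have : g x = -(h x) := hg x
    rw [this]; exact hfd
  · -- invariance identity
    have hIoiInt : IntegrableOn h (Set.Ioi x) := hhint x hx
    have hμh := hμhint x hx
    have lim1 : Tendsto (fun T => ∫ v in x..T, (θ * h v + μbar v * h v)) atTop
        (𝓝 (∫ v in Set.Ioi x, (θ * h v + μbar v * h v))) :=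
      intervalIntegral_tendsto_integral_Ioi x ((hIoiInt.const_mul θ).add hμh) tendsto_id
    have hto0 : Tendsto h atTop (𝓝 0) := by
      obtain ⟨C, hC, hCb⟩ := hhbd x hx
      have h1 : Tendsto (fun t : ℝ => Real.exp (-(θ/b) * t)) atTop (𝓝 0) := by
        rw [Real.tendsto_exp_comp_nhds_zero]
        have : Tendsto (fun t : ℝ => (θ/b) * t) atTop atTop :=
          Tendsto.const_mul_atTop (div_pos hθ hb) tendsto_id
        exact (tendsto_neg_atTop_atBot.comp this).congr (fun t => (neg_mul _ _).symm)
      have h2 : Tendsto (fun t : ℝ => C * Real.exp (-(θ/b) * t)) atTop (𝓝 0) := by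
        simpa using h1.const_mul C
      refine squeeze_zero' (Eventually.of_forall (fun t => (hhpos t).le)) ?_ h2
      filter_upwards [eventually_ge_atTop x] with t ht
      exact hCb t ht
    have lim2 : Tendsto (fun T => b * h x - b * h T) atTop (𝓝 (b * h x)) := by
      have h3 : Tendsto (fun T => b * h T) atTop (𝓝 (b * 0)) := hto0.const_mul b
      have h4 : Tendsto (fun T : ℝ => b * h x) atTop (𝓝 (b * h x)) := tendsto_const_nhds
      simpa using h4.sub h3
    have lim1' : Tendsto (fun T => b * h x - b * h T) atTop
        (𝓝 (∫ v in Set.Ioi x, (θ * h v + μbar v * h v))) := by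
      refine lim1.congr' ?_
      filter_upwards [eventually_ge_atTop x] with T hT
      exact hFTC x T hx hT
    have key2 : (∫ v in Set.Ioi x, (θ * h v + μbar v * h v)) = b * h x :=
      tendsto_nhds_unique lim1' lim2
    have hsplit : (∫ v in Set.Ioi x, (θ * h v + μbar v * h v))
        = θ * (∫ v in Set.Ioi x, h v) + ∫ v in Set.Ioi x, μbar v * h v := by
      rw [integral_add (hIoiInt.const_mul θ) hμh, integral_const_mul]
    have hgeq : ∀ y : ℝ, g y = -(h y) := fun y => hg y
    have hgv : (∫ v in Set.Ioi x, μbar v * g v) = -∫ v in Set.Ioi x, μbar v * h v := by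
      rw [← integral_neg]
      refine integral_congr_ae (Eventually.of_forall (fun v => ?_))
      show μbar v * g v = -(μbar v * h v)
      rw [hgeq v]; ring
    rw [hfe x, hgeq x, hgv]
    rw [hsplit] at key2
    linarith
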